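/- Let T be a tree with at least three vertices such that n_2(T) ≤ n_1(T) and with diameter D(T) = 3. Then χ'_s(T) = n_1(T) + 1. -/

import Mathlib

open SimpleGraph

variable {V : Type*}

/-- A vertex distinguishing proper edge `k`-coloring (vdec): a proper edge coloring
(edges sharing an endpoint get different colors) such that distinct vertices have
distinct sets of colors on their incident edges. -/
def IsVDEC (G : SimpleGraph V) (k : ℕ) (c : Sym2 V → Fin k) : Prop :=
  (∀ ⦃u v w : V⦄, G.Adj u v → G.Adj u w → v ≠ w → c s(u, v) ≠ c s(u, w)) ∧
  (∀ u v : V, u ≠ v →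
    {i : Fin k | ∃ w, G.Adj u w ∧ c s(u, w) = i} ≠
    {i : Fin k | ∃ w, G.Adj v w ∧ c s(v, w) = i})

/-- `χ'ₛ(G)`: the minimum number of colors in a vdec of `G`. -/
noncomputable def vdecNum (G : SimpleGraph V) : ℕ :=
  sInf {k : ℕ | ∃ c : Sym2 V → Fin k, IsVDEC G k c}

/-- `n_d(G)`: the number of vertices of degree `d` in `G`. -/
noncomputable def numDeg (G : SimpleGraph V) (d : ℕ) : ℕ :=
  Nat.card {v : V // Nat.card (G.neighborSet v) = d}

namespace VDECaux
variable {W : Type*} {G : SimpleGraph W}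

/-- In a tree, every path has length equal to the distance between its endpoints. -/
lemma tree_path_length (hT : G.IsTree) {a b : W} (p : G.Walk a b) (hp : p.IsPath) :
    p.length = G.dist a b := by
  obtain ⟨q, hq, hl⟩ := hT.isConnected.exists_path_of_dist a b
  rw [← hl]
  exact congrArg Walk.length ((hT.existsUnique_path a b).unique hp hq)

lemma tree_dist_ne_of_adj (hT : G.IsTree) {x y : W} (hxy : G.Adj x y) (w : W) :
    G.dist w x ≠ G.dist w y := by
  classical
  intro h
  have hconn := hT.isConnected
  by_cases hwx : w = x
  · subst hwx
    rw [G.dist_self] at h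
    exact hxy.ne ((hconn.dist_eq_zero_iff).mp h.symm)
  obtain ⟨p, hp, hl⟩ := hconn.exists_path_of_dist w x
  have hy : y ∉ p.support := by
    intro hy
    have hs := congrArg Walk.length (p.take_spec hy)
    rw [Walk.length_append] at hs
    have h1 : G.dist w y ≤ (p.takeUntil y hy).length := SimpleGraph.dist_le _
    have h2 : G.dist y x ≤ (p.dropUntil y hy).length := SimpleGraph.dist_le _
    have h4 : G.dist y x = 1 := SimpleGraph.dist_eq_one_iff_adj.mpr hxy.symm
    omega
  have hq : (p.concat hxy).IsPath := by
    rw [Walk.isPath_def, Walk.support_concat]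
    simp only [List.concat_eq_append, List.nodup_append, List.nodup_cons, List.not_mem_nil,
      not_false_iff, List.nodup_nil, and_true, List.disjoint_singleton]
    exact ⟨hp.support_nodup, by simpa using (fun a ha hay => hy (hay ▸ ha) : ∀ a ∈ p.support, ¬a = y)⟩
  have h5 := tree_path_length hT _ hq
  rw [Walk.length_concat] at h5
  omega

lemma tree_dist_step (hT : G.IsTree) {x y : W} (hxy : G.Adj x y) (w : W) :
    G.dist w y = G.dist w x + 1 ∨ G.dist w x = G.dist w y + 1 := by
  have hconn := hT.isConnected
  have h1 : G.dist w y ≤ G.dist w x + 1 := by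
    have := hconn.dist_triangle (u := w) (v := x) (w := y)
    rwa [SimpleGraph.dist_eq_one_iff_adj.mpr hxy] at this
  have h2 : G.dist w x ≤ G.dist w y + 1 := by
    have := hconn.dist_triangle (u := w) (v := y) (w := x)
    rwa [SimpleGraph.dist_eq_one_iff_adj.mpr hxy.symm] at this
  have h3 := tree_dist_ne_of_adj hT hxy w
  omega

lemma tree_walk_parity (hT : G.IsTree) (r : W) {a b : W} (p : G.Walk a b) :
    (G.dist r a + p.length) % 2 = G.dist r b % 2 := by
  induction p with
  | nil => rfl
  | cons h q ih =>
    rw [Walk.length_cons]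
    rcases tree_dist_step hT h r with h' | h' <;> omega

lemma tree_dist_parity (hT : G.IsTree) (r a b : W) :
    (G.dist r a + G.dist a b) % 2 = G.dist r b % 2 := by
  obtain ⟨p, hl⟩ := (hT.isConnected a b).exists_walk_length_eq_dist
  rw [← hl]
  exact tree_walk_parity hT r p

/-- In a tree with a path `p : x → y` of length 3 realizing the distance, any vertex at
distance 1 from `x` and 2 from `y` must be the second vertex of `p`. -/
lemma tree_mid_eq (hT : G.IsTree) {x y : W} (p : G.Walk x y) (hp : p.IsPath)
    (hl : p.length = 3) {w : W} (h1 : G.dist x w = 1) (h2 : G.dist w y = 2) :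
    w = p.getVert 1 := by
  have hxw : G.Adj x w := SimpleGraph.dist_eq_one_iff_adj.mp h1
  obtain ⟨q, hq, hql⟩ := hT.isConnected.exists_path_of_dist w y
  have hdist : G.dist x y = 3 := by rw [← tree_path_length hT p hp, hl]
  have hW : (Walk.cons hxw q).IsPath := by
    apply Walk.isPath_of_length_eq_dist
    rw [Walk.length_cons, hql, h2, hdist]
  have heq := (hT.existsUnique_path x y).unique hW hp
  have h3 := congrArg (fun r => Walk.getVert r 1) heq
  rw [← h3]; exact (Walk.getVert_zero q).symm

end VDECaux

open VDECaux in
/-- A tree `T` with at least three vertices, `n₂(T) ≤ n₁(T)` and diameter 3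
satisfies `χ'ₛ(T) = n₁(T) + 1`. -/
theorem vdecNum_of_tree_diam_three {V : Type*} [Fintype V] (G : SimpleGraph V)
    (hT : G.IsTree) (hcard : 3 ≤ Fintype.card V)
    (hn : numDeg G 2 ≤ numDeg G 1) (hdiam : G.diam = 3) :
    vdecNum G = numDeg G 1 + 1 := by
  classical
  have hconn := hT.isConnected
  have hne : Nonempty V := hconn.nonempty
  have hetop : G.ediam ≠ ⊤ := G.ediam_ne_top_of_diam_ne_zero (by omega)
  obtain ⟨x0, y0, hxy0⟩ := G.exists_dist_eq_diam
  rw [hdiam] at hxy0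
  obtain ⟨p, hp, hpl⟩ := hconn.exists_path_of_dist x0 y0
  rw [hxy0] at hpl
  set u := p.getVert 1 with hu
  set v := p.getVert 2 with hv
  have ha01 : G.Adj x0 u := by
    have := p.adj_getVert_succ (i := 0) (by omega)
    rwa [p.getVert_zero] at this
  have ha12 : G.Adj u v := p.adj_getVert_succ (i := 1) (by omega)
  have ha23 : G.Adj v y0 := by
    have := p.adj_getVert_succ (i := 2) (by omega)
    rwa [show p.getVert 3 = y0 from by rw [← hpl]; exact p.getVert_length] at this
  have dx0u : G.dist x0 u = 1 := dist_eq_one_iff_adj.mpr ha01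
  have duv : G.dist u v = 1 := dist_eq_one_iff_adj.mpr ha12
  have dvy : G.dist v y0 = 1 := dist_eq_one_iff_adj.mpr ha23
  have hdle : ∀ a b : V, G.dist a b ≤ 3 := fun a b => hdiam ▸ G.dist_le_diam hetop
  have hpar : ∀ a b c : V, (G.dist a b + G.dist b c) % 2 = G.dist a c % 2 :=
    tree_dist_parity hT
  have dx0v : G.dist x0 v = 2 := by
    have h1 : G.dist x0 v ≤ G.dist x0 u + G.dist u v := hconn.dist_triangle
    have h2 : G.dist x0 y0 ≤ G.dist x0 v + G.dist v y0 := hconn.dist_triangle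
    omega
  have duy : G.dist u y0 = 2 := by
    have h1 : G.dist u y0 ≤ G.dist u v + G.dist v y0 := hconn.dist_triangle
    have h2 : G.dist x0 y0 ≤ G.dist x0 u + G.dist u y0 := hconn.dist_triangle
    omega
  -- reversed path
  have hprl : p.reverse.length = 3 := by rw [Walk.length_reverse, hpl]
  have hprv : p.reverse.getVert 1 = v := by
    rw [Walk.getVert_reverse, hpl]
  -- classification of vertices
  have hclass : ∀ w : V, w = u ∨ w = v ∨ G.Adj u w ∨ G.Adj v w := by
    intro w
    have h1 : G.dist x0 w ≤ 3 := hdle _ _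
    have h2 : G.dist w y0 ≤ 3 := hdle _ _
    have h3 : G.dist x0 y0 ≤ G.dist x0 w + G.dist w y0 := hconn.dist_triangle
    have h4 := hpar x0 w y0
    rw [hxy0] at h3 h4
    have hcases : (G.dist x0 w = 0 ∧ G.dist w y0 = 3) ∨ (G.dist x0 w = 1 ∧ G.dist w y0 = 2) ∨
        (G.dist x0 w = 2 ∧ G.dist w y0 = 1) ∨ (G.dist x0 w = 3 ∧ G.dist w y0 = 0) ∨
        (G.dist x0 w = 2 ∧ G.dist w y0 = 3) ∨ (G.dist x0 w = 3 ∧ G.dist w y0 = 2) := by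
      omega
    rcases hcases with ⟨hA, hB⟩ | ⟨hA, hB⟩ | ⟨hA, hB⟩ | ⟨hA, hB⟩ | ⟨hA, hB⟩ | ⟨hA, hB⟩
    · have : x0 = w := (hconn.dist_eq_zero_iff).mp hA
      exact Or.inr (Or.inr (Or.inl (this ▸ ha01.symm)))
    · exact Or.inl (tree_mid_eq hT p hp hpl hA hB)
    · refine Or.inr (Or.inl ?_)
      have := tree_mid_eq hT p.reverse hp.reverse hprl
        (x := y0) (by rwa [SimpleGraph.dist_comm]) (by rwa [SimpleGraph.dist_comm])
      rwa [hprv] at this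
    · have : y0 = w := (hconn.dist_eq_zero_iff).mp (by rwa [dist_comm] at hB)
      exact Or.inr (Or.inr (Or.inr (this ▸ ha23)))
    · -- dist x0 w = 2, dist w y0 = 3 : w is adjacent to u
      obtain ⟨q, hq, hql⟩ := hconn.exists_path_of_dist x0 w
      rw [hA] at hql
      set t := q.getVert 1 with ht
      have hx0t : G.Adj x0 t := by
        have := q.adj_getVert_succ (i := 0) (by omega)
        rwa [q.getVert_zero] at this
      have htw : G.Adj t w := by
        have := q.adj_getVert_succ (i := 1) (by omega)
        rwa [show q.getVert 2 = w from by rw [← hql]; exact q.getVert_length] at this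
      have hdt : G.dist x0 t = 1 := dist_eq_one_iff_adj.mpr hx0t
      have hty : G.dist t y0 = 2 := by
        have p1 := hpar x0 t y0
        rw [hxy0, hdt] at p1
        have l1 : G.dist t y0 ≤ 3 := hdle _ _
        have l2 : G.dist w y0 ≤ G.dist w t + G.dist t y0 := hconn.dist_triangle
        have l3 : G.dist w t = 1 := dist_eq_one_iff_adj.mpr htw.symm
        omega
      have hmid := tree_mid_eq hT p hp hpl hdt hty
      have htu : u = t := hu.trans hmid.symm
      exact Or.inr (Or.inr (Or.inl (by rw [htu]; exact htw)))
    · -- dist x0 w = 3, dist w y0 = 2 : w is adjacent to v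
      obtain ⟨q, hq, hql⟩ := hconn.exists_path_of_dist y0 w
      rw [SimpleGraph.dist_comm] at hB
      rw [hB] at hql
      set t := q.getVert 1 with ht
      have hy0t : G.Adj y0 t := by
        have := q.adj_getVert_succ (i := 0) (by omega)
        rwa [q.getVert_zero] at this
      have htw : G.Adj t w := by
        have := q.adj_getVert_succ (i := 1) (by omega)
        rwa [show q.getVert 2 = w from by rw [← hql]; exact q.getVert_length] at this
      have hdt : G.dist y0 t = 1 := dist_eq_one_iff_adj.mpr hy0t
      have hty : G.dist t x0 = 2 := by
        have p1 := hpar y0 t x0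
        rw [show G.dist y0 x0 = 3 from by rw [SimpleGraph.dist_comm]; exact hxy0, hdt] at p1
        have l1 : G.dist t x0 ≤ 3 := hdle _ _
        have l2 : G.dist w x0 ≤ G.dist w t + G.dist t x0 := hconn.dist_triangle
        have l3 : G.dist w t = 1 := dist_eq_one_iff_adj.mpr htw.symm
        have l4 : G.dist w x0 = 3 := by rwa [dist_comm]
        omega
      have hmid := tree_mid_eq hT p.reverse hp.reverse hprl hdt hty
      rw [hprv] at hmid
      exact Or.inr (Or.inr (Or.inr (by rw [show v = t from hmid.symm]; exact htw)))
  -- distinctness of the four path vertices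
  have hx0u : x0 ≠ u := ha01.ne
  have huv : u ≠ v := ha12.ne
  have hx0v : x0 ≠ v := by
    intro h; rw [h] at dx0v; simp [G.dist_self] at dx0v
  have hy0v : y0 ≠ v := ha23.ne'
  have hy0u : y0 ≠ u := by
    intro h; rw [h] at duy; simp [G.dist_self] at duy
  -- uniqueness of paths
  have huniq : ∀ {a b : V} (q1 q2 : G.Walk a b), q1.IsPath → q2.IsPath → q1 = q2 :=
    fun q1 q2 h1 h2 => (hT.existsUnique_path _ _).unique h1 h2
  have key : ∀ (a b w x : V), G.Adj a b → G.Adj a w → w ≠ b → G.Adj w x → x ≠ a →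
      (x = b ∨ G.Adj a x ∨ G.Adj b x) → False := by
    intro a b w x hab haw hwb hwx hxa hcase
    have h2 : (Walk.cons haw (Walk.cons hwx Walk.nil)).IsPath := by
      rw [Walk.cons_isPath_iff, Walk.cons_isPath_iff]
      refine ⟨⟨Walk.IsPath.nil, by simp [hwx.ne]⟩, by simp [haw.ne, hxa.symm]⟩
    rcases hcase with rfl | hax | hbx
    · have h1 : (Walk.cons hab Walk.nil).IsPath := by
        rw [Walk.cons_isPath_iff]; exact ⟨Walk.IsPath.nil, by simp [hab.ne]⟩
      simpa using congrArg Walk.length (huniq _ _ h1 h2)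
    · have h1 : (Walk.cons hax Walk.nil).IsPath := by
        rw [Walk.cons_isPath_iff]; exact ⟨Walk.IsPath.nil, by simp [hax.ne]⟩
      simpa using congrArg Walk.length (huniq _ _ h1 h2)
    · have h1 : (Walk.cons hab Walk.nil).IsPath := by
        rw [Walk.cons_isPath_iff]; exact ⟨Walk.IsPath.nil, by simp [hab.ne]⟩
      have h3 : (Walk.cons haw (Walk.cons hwx (Walk.cons hbx.symm Walk.nil))).IsPath := by
        rw [Walk.cons_isPath_iff, Walk.cons_isPath_iff, Walk.cons_isPath_iff]
        refine ⟨⟨⟨Walk.IsPath.nil, by simp [hbx.ne']⟩, by simp [hwx.ne, hwb]⟩,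
          by simp [haw.ne, hxa.symm, hab.ne]⟩
      simpa using congrArg Walk.length (huniq _ _ h1 h3)
  -- every non-center vertex is a pendant vertex
  have hnbhdu : ∀ w, G.Adj u w → w ≠ v → G.neighborSet w = {u} := by
    intro w h1 h2
    ext x
    simp only [mem_neighborSet, Set.mem_singleton_iff]
    constructor
    · intro hx
      by_contra hxu
      apply key u v w x ha12 h1 h2 hx hxu
      rcases hclass x with rfl | rfl | h | h
      · exact absurd rfl hxu
      · exact Or.inl rfl
      · exact Or.inr (Or.inl h)
      · exact Or.inr (Or.inr h)
    · rintro rfl; exact h1.symm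
  have hnbhdv : ∀ w, G.Adj v w → w ≠ u → G.neighborSet w = {v} := by
    intro w h1 h2
    ext x
    simp only [mem_neighborSet, Set.mem_singleton_iff]
    constructor
    · intro hx
      by_contra hxv
      apply key v u w x ha12.symm h1 h2 hx hxv
      rcases hclass x with rfl | rfl | h | h
      · exact Or.inl rfl
      · exact absurd rfl hxv
      · exact Or.inr (Or.inr h)
      · exact Or.inr (Or.inl h)
    · rintro rfl; exact h1.symm
  have hdeg1 : ∀ w, w ≠ u → w ≠ v → Nat.card (G.neighborSet w) = 1 := by
    intro w h1 h2
    rcases hclass w with rfl | rfl | h | h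
    · exact absurd rfl h1
    · exact absurd rfl h2
    · rw [hnbhdu w h h2, Nat.card_coe_set_eq, Set.ncard_singleton]
    · rw [hnbhdv w h h1, Nat.card_coe_set_eq, Set.ncard_singleton]
  have hdegu : Nat.card (G.neighborSet u) ≠ 1 := by
    intro hcontr
    rw [Nat.card_coe_set_eq, Set.ncard_eq_one] at hcontr
    obtain ⟨a, ha⟩ := hcontr
    have h1 : v ∈ G.neighborSet u := ha12
    have h2 : x0 ∈ G.neighborSet u := ha01.symm
    rw [ha, Set.mem_singleton_iff] at h1 h2
    exact hx0v (h2.trans h1.symm)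
  have hdegv : Nat.card (G.neighborSet v) ≠ 1 := by
    intro hcontr
    rw [Nat.card_coe_set_eq, Set.ncard_eq_one] at hcontr
    obtain ⟨a, ha⟩ := hcontr
    have h1 : u ∈ G.neighborSet v := ha12.symm
    have h2 : y0 ∈ G.neighborSet v := ha23
    rw [ha, Set.mem_singleton_iff] at h1 h2
    exact hy0u (h2.trans h1.symm)
  have hcenter : ∀ z, Nat.card (G.neighborSet z) ≠ 1 → z = u ∨ z = v := by
    intro z hz
    by_cases h1 : z = u
    · exact Or.inl h1
    by_cases h2 : z = v
    · exact Or.inr h2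
    exact absurd (hdeg1 z h1 h2) hz
  -- the pendant vertices
  have hnbhd : ∀ w : {w : V // Nat.card (G.neighborSet w) = 1},
      G.neighborSet (w : V) = {u} ∨ G.neighborSet (w : V) = {v} := by
    rintro ⟨w, hw⟩
    have h1 : w ≠ u := fun h => hdegu (h ▸ hw)
    have h2 : w ≠ v := fun h => hdegv (h ▸ hw)
    rcases hclass w with rfl | rfl | h | h
    · exact absurd rfl h1
    · exact absurd rfl h2
    · exact Or.inl (hnbhdu w h h2)
    · exact Or.inr (hnbhdv w h h1)
  set nbC : {w : V // Nat.card (G.neighborSet w) = 1} → V :=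
    fun w => if G.neighborSet (w : V) = {u} then u else v with hnbCdef
  have hnbC : ∀ w : {w : V // Nat.card (G.neighborSet w) = 1},
      G.neighborSet (w : V) = {nbC w} := by
    intro w
    by_cases h : G.neighborSet (w : V) = {u}
    · rw [show nbC w = u from by simp [hnbCdef, h]]; exact h
    · rw [show nbC w = v from by simp [hnbCdef, h]]
      rcases hnbhd w with h' | h'
      · exact absurd h' h
      · exact h'
  have hadjnb : ∀ w : {w : V // Nat.card (G.neighborSet w) = 1}, G.Adj (w : V) (nbC w) := by
    intro w
    have : nbC w ∈ G.neighborSet (w : V) := by rw [hnbC w]; exact rfl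
    exact this
  have huniqnb : ∀ (w : {w : V // Nat.card (G.neighborSet w) = 1}) (x : V),
      G.Adj (w : V) x → x = nbC w := by
    intro w x hx
    have : x ∈ G.neighborSet (w : V) := hx
    rwa [hnbC w, Set.mem_singleton_iff] at this
  have hnbuv : ∀ w : {w : V // Nat.card (G.neighborSet w) = 1}, nbC w = u ∨ nbC w = v := by
    intro w
    by_cases h : G.neighborSet (w : V) = {u}
    · exact Or.inl (by simp [hnbCdef, h])
    · exact Or.inr (by simp [hnbCdef, h])
  have hx0lf : Nat.card (G.neighborSet x0) = 1 := hdeg1 x0 hx0u hx0v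
  have hnbx0 : nbC ⟨x0, hx0lf⟩ = u := (huniqnb ⟨x0, hx0lf⟩ u ha01).symm
  -- counting
  have hfin : Fintype.card {w : V // Nat.card (G.neighborSet w) = 1} = numDeg G 1 := by
    rw [← Nat.card_eq_fintype_card]; rfl
  -- lower bound
  have hlow : ∀ k, (∃ c : Sym2 V → Fin k, IsVDEC G k c) → numDeg G 1 + 1 ≤ k := by
    rintro k ⟨c, hcp, hcd⟩
    have hFinj : Function.Injective
        (fun o : Option {w : V // Nat.card (G.neighborSet w) = 1} =>
          o.elim (c s(u, v)) (fun w => c s((w : V), nbC w))) := by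
      intro o o' h
      rcases o with _ | w <;> rcases o' with _ | w'
      · rfl
      · exfalso
        simp only [Option.elim] at h
        rcases hnbuv w' with hnb | hnb
        · rw [hnb] at h
          exact hcp ha12 (by have := (hadjnb w').symm; rwa [hnb] at this)
            (fun hh => hdegv (by rw [hh]; exact w'.2))
            (by rw [show s(u, (w' : V)) = s((w' : V), u) from Sym2.eq_swap]; exact h)
        · rw [hnb] at h
          exact hcp ha12.symm (by have := (hadjnb w').symm; rwa [hnb] at this)
            (fun hh => hdegu (by rw [hh]; exact w'.2))
            (by rw [show s(v, u) = s(u, v) from Sym2.eq_swap, show s(v, (w' : V)) = s((w' : V), v) from Sym2.eq_swap]; exact h)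
      · exfalso
        simp only [Option.elim] at h
        rcases hnbuv w with hnb | hnb
        · rw [hnb] at h
          exact hcp ha12 (by have := (hadjnb w).symm; rwa [hnb] at this)
            (fun hh => hdegv (by rw [hh]; exact w.2))
            (by rw [show s(u, (w : V)) = s((w : V), u) from Sym2.eq_swap]; exact h.symm)
        · rw [hnb] at h
          exact hcp ha12.symm (by have := (hadjnb w).symm; rwa [hnb] at this)
            (fun hh => hdegu (by rw [hh]; exact w.2))
            (by rw [show s(v, u) = s(u, v) from Sym2.eq_swap, show s(v, (w : V)) = s((w : V), v) from Sym2.eq_swap]; exact h.symm)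
      · simp only [Option.elim] at h
        congr 1
        by_contra hne
        refine hcd (w : V) (w' : V) (fun hh => hne (Subtype.ext hh)) ?_
        ext i
        simp only [Set.mem_setOf_eq]
        constructor
        · rintro ⟨x, hx, rfl⟩
          rw [huniqnb w x hx]
          exact ⟨nbC w', hadjnb w', h.symm⟩
        · rintro ⟨x, hx, rfl⟩
          rw [huniqnb w' x hx]
          exact ⟨nbC w, hadjnb w, h⟩
    have hcle := Fintype.card_le_of_injective _ hFinj
    rwa [Fintype.card_option, Fintype.card_fin, hfin] at hcle
    -- upper bound: construct a vdec with numDeg G 1 + 1 colors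
  have e : {w : V // Nat.card (G.neighborSet w) = 1} ≃ Fin (numDeg G 1) :=
    Fintype.equivFinOfCardEq hfin
  set g : V → Fin (numDeg G 1 + 1) := fun x =>
    if hx : Nat.card (G.neighborSet x) = 1 then (e ⟨x, hx⟩).succ else 0 with hgdef
  have hg0 : ∀ z : V, Nat.card (G.neighborSet z) ≠ 1 → g z = 0 := by
    intro z hz; simp only [hgdef]; rw [dif_neg hz]
  have hgl : ∀ w : {w : V // Nat.card (G.neighborSet w) = 1}, g (w : V) = (e w).succ := by
    intro w; simp only [hgdef]; rw [dif_pos w.2]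
  have hfsym : ∀ x y : V, g x + g y = g y + g x := fun x y => add_comm _ _
  set c : Sym2 V → Fin (numDeg G 1 + 1) :=
    Sym2.lift ⟨fun x y => g x + g y, hfsym⟩ with hcdef
  have hceval : ∀ x y : V, c s(x, y) = g x + g y := by
    intro x y; rw [hcdef, Sym2.lift_mk]
  have hcuv : c s(u, v) = 0 := by
    rw [hceval, hg0 u hdegu, hg0 v hdegv, add_zero]
  have hclf : ∀ (w : {w : V // Nat.card (G.neighborSet w) = 1}) (z : V),
      Nat.card (G.neighborSet z) ≠ 1 → c s(z, (w : V)) = (e w).succ := by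
    intro w z hz
    rw [hceval, hg0 z hz, hgl w, zero_add]
  -- properness
  have hprop : ∀ ⦃a b b' : V⦄, G.Adj a b → G.Adj a b' → b ≠ b' → c s(a, b) ≠ c s(a, b') := by
    intro a b b' h1 h2 hne12
    by_cases ha : Nat.card (G.neighborSet a) = 1
    · exact absurd ((huniqnb ⟨a, ha⟩ b h1).trans (huniqnb ⟨a, ha⟩ b' h2).symm) hne12
    by_cases hb : Nat.card (G.neighborSet b) = 1 <;>
      by_cases hb' : Nat.card (G.neighborSet b') = 1
    · rw [hclf ⟨b, hb⟩ a ha, hclf ⟨b', hb'⟩ a ha]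
      intro hEq
      have := e.injective (Fin.succ_injective _ hEq)
      exact hne12 (congrArg Subtype.val this)
    · rw [hclf ⟨b, hb⟩ a ha, show c s(a, b') = 0 from by
        rw [hceval, hg0 a ha, hg0 b' hb', add_zero]]
      exact Fin.succ_ne_zero _
    · rw [hclf ⟨b', hb'⟩ a ha, show c s(a, b) = 0 from by
        rw [hceval, hg0 a ha, hg0 b hb, add_zero]]
      exact (Fin.succ_ne_zero _).symm
    · exfalso
      rcases hcenter a ha with rfl | rfl <;> rcases hcenter b hb with h3 | h3 <;>
        rcases hcenter b' hb' with h4 | h4 <;>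
        first
          | exact h1.ne h3.symm
          | exact h2.ne h4.symm
          | exact hne12 (h3.trans h4.symm)
  -- the color set of a pendant vertex is a singleton
  have hsetlf : ∀ w : {w : V // Nat.card (G.neighborSet w) = 1},
      {i : Fin (numDeg G 1 + 1) | ∃ x, G.Adj (w : V) x ∧ c s((w : V), x) = i} = {(e w).succ} := by
    intro w
    have hnbc : Nat.card (G.neighborSet (nbC w)) ≠ 1 := by
      rcases hnbuv w with h | h <;> rw [h]
      · exact hdegu
      · exact hdegv
    have hval : c s((w : V), nbC w) = (e w).succ := by
      rw [show s((w : V), nbC w) = s(nbC w, (w : V)) from Sym2.eq_swap]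
      exact hclf w (nbC w) hnbc
    ext i
    simp only [Set.mem_setOf_eq, Set.mem_singleton_iff]
    constructor
    · rintro ⟨x, hx, rfl⟩
      rw [huniqnb w x hx]
      exact hval
    · rintro rfl
      exact ⟨nbC w, hadjnb w, hval⟩
  have hset0 : ∀ z : V, z = u ∨ z = v →
      (0 : Fin (numDeg G 1 + 1)) ∈ {i : Fin (numDeg G 1 + 1) | ∃ x, G.Adj z x ∧ c s(z, x) = i} := by
    rintro z (rfl | rfl)
    · exact ⟨v, ha12, hcuv⟩
    · exact ⟨u, ha12.symm, by rw [show s(v, u) = s(u, v) from Sym2.eq_swap]; exact hcuv⟩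
  have hSuv : {i : Fin (numDeg G 1 + 1) | ∃ x, G.Adj u x ∧ c s(u, x) = i} ≠
      {i : Fin (numDeg G 1 + 1) | ∃ x, G.Adj v x ∧ c s(v, x) = i} := by
    intro hEq
    have hmem : (e ⟨x0, hx0lf⟩).succ ∈
        {i : Fin (numDeg G 1 + 1) | ∃ x, G.Adj u x ∧ c s(u, x) = i} :=
      ⟨x0, ha01.symm, hclf ⟨x0, hx0lf⟩ u hdegu⟩
    rw [hEq] at hmem
    obtain ⟨x, hx, hval⟩ := hmem
    by_cases hxlf : Nat.card (G.neighborSet x) = 1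
    · rw [hclf ⟨x, hxlf⟩ v hdegv] at hval
      have hxx0 : (⟨x, hxlf⟩ : {w : V // Nat.card (G.neighborSet w) = 1}) = ⟨x0, hx0lf⟩ :=
        e.injective (Fin.succ_injective _ hval)
      have hvx : v = nbC ⟨x, hxlf⟩ := huniqnb ⟨x, hxlf⟩ v hx.symm
      rw [hxx0, hnbx0] at hvx
      exact huv hvx.symm
    · rcases hcenter x hxlf with rfl | rfl
      · rw [show s(v, u) = s(u, v) from Sym2.eq_swap, hcuv] at hval
        exact Fin.succ_ne_zero _ hval.symm
      · exact hx.ne rfl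
  have hdist : ∀ a b : V, a ≠ b →
      {i : Fin (numDeg G 1 + 1) | ∃ x, G.Adj a x ∧ c s(a, x) = i} ≠
      {i : Fin (numDeg G 1 + 1) | ∃ x, G.Adj b x ∧ c s(b, x) = i} := by
    intro a b hab
    by_cases haL : Nat.card (G.neighborSet a) = 1 <;>
      by_cases hbL : Nat.card (G.neighborSet b) = 1
    · rw [hsetlf ⟨a, haL⟩, hsetlf ⟨b, hbL⟩]
      intro hEq
      have h1 : (e ⟨a, haL⟩).succ = (e ⟨b, hbL⟩).succ :=
        Set.singleton_eq_singleton_iff.mp hEq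
      have := e.injective (Fin.succ_injective _ h1)
      exact hab (congrArg Subtype.val this)
    · rw [hsetlf ⟨a, haL⟩]
      intro hEq
      have h0 : (0 : Fin (numDeg G 1 + 1)) ∈ ({(e ⟨a, haL⟩).succ} : Set _) := by
        rw [hEq]; exact hset0 b (hcenter b hbL)
      exact Fin.succ_ne_zero _ (Set.mem_singleton_iff.mp h0).symm
    · rw [hsetlf ⟨b, hbL⟩]
      intro hEq
      have h0 : (0 : Fin (numDeg G 1 + 1)) ∈ ({(e ⟨b, hbL⟩).succ} : Set _) := by
        rw [← hEq]; exact hset0 a (hcenter a haL)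
      exact Fin.succ_ne_zero _ (Set.mem_singleton_iff.mp h0).symm
    · rcases hcenter a haL with rfl | rfl <;> rcases hcenter b hbL with rfl | rfl
      · exact absurd rfl hab
      · exact hSuv
      · exact Ne.symm hSuv
      · exact absurd rfl hab
  have hmem : numDeg G 1 + 1 ∈ {k : ℕ | ∃ c : Sym2 V → Fin k, IsVDEC G k c} :=
    ⟨c, hprop, hdist⟩
  have hSne : {k : ℕ | ∃ c : Sym2 V → Fin k, IsVDEC G k c}.Nonempty := ⟨numDeg G 1 + 1, hmem⟩
  rw [vdecNum]
  exact le_antisymm (Nat.sInf_le hmem) (hlow _ (Nat.sInf_mem hSne))
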